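/- For row stochastic square matrices A(1), ..., A(p) of the same size, the coefficient δ of the (backward) product satisfies δ(A(p)···A(1)) ≤ Π_{τ=1}^p λ(A(τ)), where δ(A) = max_j max_{i1,i2} |A_{i1,j} − A_{i2,j}| and λ(A) = 1 − min_{i1,i2} Σ_j min(A_{i1,j}, A_{i2,j}). -/

import Mathlib

noncomputable def hajLam {n : ℕ} (B : Matrix (Fin n) (Fin n) ℝ) : ℝ :=
  1 - ⨅ i₁' : Fin n, ⨅ i₂' : Fin n, ∑ k, min (B i₁' k) (B i₂' k)

lemma hajLam_nonneg {n : ℕ} (hn : 0 < n) (B : Matrix (Fin n) (Fin n) ℝ)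
    (h1 : ∀ i, ∑ k, B i k = 1) : 0 ≤ hajLam B := by
  have i0 : Fin n := ⟨0, hn⟩
  have h : (⨅ i₁' : Fin n, ⨅ i₂' : Fin n, ∑ k, min (B i₁' k) (B i₂' k)) ≤ 1 := by
    have := ciInf_le (f := fun i₁' : Fin n => ⨅ i₂' : Fin n, ∑ k, min (B i₁' k) (B i₂' k))
      (Finite.bddBelow_range _) i0
    refine this.trans ?_
    have := ciInf_le (f := fun i₂' : Fin n => ∑ k, min (B i0 k) (B i₂' k))
      (Finite.bddBelow_range _) i0
    refine this.trans ?_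
    simp [h1 i0]
  simpa [hajLam] using sub_nonneg.mpr h

lemma haj_key {n : ℕ} (hn : 0 < n) (B M : Matrix (Fin n) (Fin n) ℝ)
    (hB0 : ∀ i k, 0 ≤ B i k) (hB1 : ∀ i, ∑ k, B i k = 1)
    (d : ℝ) (hd : 0 ≤ d) (hM : ∀ j i₁ i₂, |M i₁ j - M i₂ j| ≤ d) :
    ∀ j i₁ i₂, |(B * M) i₁ j - (B * M) i₂ j| ≤ hajLam B * d := by
  intro j i₁ i₂
  have hne : (Finset.univ : Finset (Fin n)).Nonempty := ⟨⟨0, hn⟩, Finset.mem_univ _⟩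
  set c : Fin n → ℝ := fun k => min (B i₁ k) (B i₂ k) with hc
  set s : ℝ := 1 - ∑ k, c k with hs
  have hc1 : ∀ k, c k ≤ B i₁ k := fun k => min_le_left _ _
  have hc2 : ∀ k, c k ≤ B i₂ k := fun k => min_le_right _ _
  have hs1 : ∑ k, (B i₁ k - c k) = s := by rw [Finset.sum_sub_distrib, hB1 i₁, hs]
  have hs2 : ∑ k, (B i₂ k - c k) = s := by rw [Finset.sum_sub_distrib, hB1 i₂, hs]
  have hs0 : 0 ≤ s := by
    rw [← hs1]; exact Finset.sum_nonneg fun k _ => sub_nonneg.mpr (hc1 k)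
  -- s ≤ hajLam B
  have hsl : s ≤ hajLam B := by
    have h : (⨅ i₁' : Fin n, ⨅ i₂' : Fin n, ∑ k, min (B i₁' k) (B i₂' k)) ≤ ∑ k, c k := by
      have h1 := ciInf_le (f := fun i₁' : Fin n => ⨅ i₂' : Fin n, ∑ k, min (B i₁' k) (B i₂' k))
        (Finite.bddBelow_range _) i₁
      have h2 := ciInf_le (f := fun i₂' : Fin n => ∑ k, min (B i₁ k) (B i₂' k))
        (Finite.bddBelow_range _) i₂
      exact h1.trans h2
    simpa [hajLam, hs] using sub_le_sub_left h 1
  -- max and min of column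
  set mx : ℝ := Finset.univ.sup' hne (fun k => M k j) with hmx
  set mn : ℝ := Finset.univ.inf' hne (fun k => M k j) with hmn
  have hmxd : mx - mn ≤ d := by
    obtain ⟨k1, _, hk1⟩ := Finset.exists_mem_eq_sup' hne (fun k => M k j)
    obtain ⟨k2, _, hk2⟩ := Finset.exists_mem_eq_inf' hne (fun k => M k j)
    rw [hmx, hmn, hk1, hk2]
    exact (le_abs_self _).trans (hM j k1 k2)
  have hdiff : (B * M) i₁ j - (B * M) i₂ j
      = ∑ k, (B i₁ k - c k) * M k j - ∑ k, (B i₂ k - c k) * M k j := by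
    simp only [Matrix.mul_apply, ← Finset.sum_sub_distrib]
    congr 1; ext k; ring
  have hub : ∀ i', (∀ k, c k ≤ B i' k) → ∑ k, (B i' k - c k) = s →
      ∑ k, (B i' k - c k) * M k j ≤ s * mx ∧ s * mn ≤ ∑ k, (B i' k - c k) * M k j := by
    intro i' hle hsum
    constructor
    · calc ∑ k, (B i' k - c k) * M k j ≤ ∑ k, (B i' k - c k) * mx := by
            refine Finset.sum_le_sum fun k _ => ?_
            exact mul_le_mul_of_nonneg_left (Finset.le_sup' (f := fun k => M k j) (Finset.mem_univ k))
              (sub_nonneg.mpr (hle k))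
        _ = s * mx := by rw [← Finset.sum_mul, hsum]
    · calc s * mn = ∑ k, (B i' k - c k) * mn := by rw [← Finset.sum_mul, hsum]
        _ ≤ ∑ k, (B i' k - c k) * M k j := by
            refine Finset.sum_le_sum fun k _ => ?_
            exact mul_le_mul_of_nonneg_left (Finset.inf'_le (f := fun k => M k j) (Finset.mem_univ k))
              (sub_nonneg.mpr (hle k))
  obtain ⟨h1u, h1l⟩ := hub i₁ hc1 hs1
  obtain ⟨h2u, h2l⟩ := hub i₂ hc2 hs2
  have habs : |(B * M) i₁ j - (B * M) i₂ j| ≤ s * (mx - mn) := by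
    rw [hdiff, abs_le]
    constructor <;> nlinarith
  calc |(B * M) i₁ j - (B * M) i₂ j| ≤ s * (mx - mn) := habs
    _ ≤ s * d := mul_le_mul_of_nonneg_left hmxd hs0
    _ ≤ hajLam B * d := mul_le_mul_of_nonneg_right hsl hd

lemma haj_list {n : ℕ} (hn : 0 < n) :
    ∀ L : List (Matrix (Fin n) (Fin n) ℝ),
      (∀ B ∈ L, (∀ i k, 0 ≤ B i k) ∧ ∀ i, ∑ k, B i k = 1) →
      ∀ j i₁ i₂, |L.prod i₁ j - L.prod i₂ j| ≤ (L.map hajLam).prod := by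
  intro L
  induction L with
  | nil =>
      intro _ j i₁ i₂
      simp only [List.prod_nil, List.map_nil]
      rw [abs_le]
      constructor <;> simp [Matrix.one_apply] <;> split_ifs <;> norm_num
  | cons B t ih =>
      intro hmem j i₁ i₂
      have hB := hmem B List.mem_cons_self
      have ht : ∀ C ∈ t, (∀ i k, 0 ≤ C i k) ∧ ∀ i, ∑ k, C i k = 1 :=
        fun C hC => hmem C (List.mem_cons_of_mem _ hC)
      have hd : 0 ≤ (t.map hajLam).prod := by
        refine List.prod_nonneg fun x hx => ?_
        obtain ⟨C, hC, rfl⟩ := List.mem_map.mp hx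
        exact hajLam_nonneg hn C (ht C hC).2
      have := haj_key hn B t.prod hB.1 hB.2 (t.map hajLam).prod hd
        (fun j i₁ i₂ => ih ht j i₁ i₂) j i₁ i₂
      simpa [List.prod_cons, List.map_cons] using this

/-- Hajnal's inequality: `δ` of a backward product of row stochastic matrices
is at most the product of the `λ` coefficients. -/
theorem stmt_7 {n p : ℕ} (hn : 0 < n)
    (A : Fin p → Matrix (Fin n) (Fin n) ℝ)
    (hnonneg : ∀ τ i k, 0 ≤ A τ i k) (hrow : ∀ τ i, ∑ k, A τ i k = 1) :
    ∀ j i₁ i₂,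
      |(List.ofFn A).reverse.prod i₁ j - (List.ofFn A).reverse.prod i₂ j|
        ≤ ∏ τ, (1 - ⨅ i₁', ⨅ i₂', ∑ k, min (A τ i₁' k) (A τ i₂' k)) := by
  intro j i₁ i₂
  have hmem : ∀ B ∈ (List.ofFn A).reverse, (∀ i k, 0 ≤ B i k) ∧ ∀ i, ∑ k, B i k = 1 := by
    intro B hB
    rw [List.mem_reverse, List.mem_ofFn] at hB
    obtain ⟨τ, rfl⟩ := hB
    exact ⟨hnonneg τ, hrow τ⟩
  have h := haj_list hn (List.ofFn A).reverse hmem j i₁ i₂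
  refine h.trans (le_of_eq ?_)
  rw [List.map_reverse, List.prod_reverse, List.map_ofFn, List.prod_ofFn]
  rfl
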